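/- Let R be an n×n real matrix whose symmetric part (R + Rᵀ)/2 is positive definite. Then for every v ∈ ℝⁿ, vᵀ R⁻¹ v ≤ vᵀ ((R + Rᵀ)/2)⁻¹ v. -/

import Mathlib

open Matrix

/-- `P₀ ≤ P₁`: for `R` with positive definite symmetric part,
`vᵀR⁻¹v ≤ vᵀ((R + Rᵀ)/2)⁻¹v` for every `v`. -/
theorem quadratic_form_inverse_le_symmetrized
    (n : ℕ) (R : Matrix (Fin n) (Fin n) ℝ)
    (hR : ∀ x : Fin n → ℝ, x ≠ 0 → 0 < x ⬝ᵥ (R *ᵥ x)) :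
    ∀ v : Fin n → ℝ, v ⬝ᵥ (R⁻¹ *ᵥ v) ≤ v ⬝ᵥ (((2:ℝ)⁻¹ • (R + Rᵀ))⁻¹ *ᵥ v) := by
  intro v
  set S : Matrix (Fin n) (Fin n) ℝ := (2:ℝ)⁻¹ • (R + Rᵀ) with hSdef
  -- quadratic form of S equals that of R
  have hSform : ∀ x : Fin n → ℝ, x ⬝ᵥ (S *ᵥ x) = x ⬝ᵥ (R *ᵥ x) := by
    intro x
    have h1 : x ⬝ᵥ (Rᵀ *ᵥ x) = x ⬝ᵥ (R *ᵥ x) := by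
      rw [Matrix.mulVec_transpose, dotProduct_comm, ← Matrix.dotProduct_mulVec]
    simp only [hSdef, Matrix.smul_mulVec, Matrix.add_mulVec, dotProduct_smul,
      dotProduct_add, h1, smul_eq_mul]
    ring
  have hSsymm : Sᵀ = S := by
    simp [hSdef, Matrix.transpose_smul, Matrix.transpose_add, add_comm]
  -- S is positive definite
  have hSpd : S.PosDef := by
    refine Matrix.PosDef.of_dotProduct_mulVec_pos ?_ ?_
    · rw [Matrix.IsHermitian]
      ext i j
      simpa using congrFun (congrFun hSsymm i) j
    · intro x hx
      simpa [hSform x] using hR x hx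
  have hSunit : IsUnit S.det := (Matrix.isUnit_iff_isUnit_det S).1 hSpd.isUnit
  have hSinv : S * S⁻¹ = 1 := Matrix.mul_nonsing_inv S hSunit
  -- R is invertible
  have hRunit : IsUnit R.det := by
    rw [← Matrix.isUnit_iff_isUnit_det, ← Matrix.mulVec_injective_iff_isUnit]
    intro x y hxy
    by_contra hne
    have hz : x - y ≠ 0 := sub_ne_zero.mpr hne
    have := hR (x - y) hz
    rw [Matrix.mulVec_sub, hxy, sub_self] at this
    simp at this
  have hRinv : R * R⁻¹ = 1 := Matrix.mul_nonsing_inv R hRunit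
  set x : Fin n → ℝ := R⁻¹ *ᵥ v with hxdef
  have hRx : R *ᵥ x = v := by
    rw [hxdef, Matrix.mulVec_mulVec, hRinv, Matrix.one_mulVec]
  set y : Fin n → ℝ := S⁻¹ *ᵥ v with hydef
  have hSy : S *ᵥ y = v := by
    rw [hydef, Matrix.mulVec_mulVec, hSinv, Matrix.one_mulVec]
  -- key nonnegativity
  have hw : 0 ≤ (y - x) ⬝ᵥ (S *ᵥ (y - x)) := by
    have := hSpd.posSemidef.dotProduct_mulVec_nonneg (y - x)
    simpa only [star_trivial] using this
  -- expand
  have hySx : y ⬝ᵥ (S *ᵥ x) = v ⬝ᵥ x := by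
    rw [Matrix.dotProduct_mulVec, ← Matrix.mulVec_transpose, hSsymm, hSy]
  have hySy : y ⬝ᵥ (S *ᵥ y) = v ⬝ᵥ y := by
    rw [Matrix.dotProduct_mulVec, ← Matrix.mulVec_transpose, hSsymm, hSy]
  have hxSy : x ⬝ᵥ (S *ᵥ y) = x ⬝ᵥ v := by rw [hSy]
  have hxSx : x ⬝ᵥ (S *ᵥ x) = x ⬝ᵥ v := by rw [hSform, hRx]
  have hexp : (y - x) ⬝ᵥ (S *ᵥ (y - x)) = v ⬝ᵥ y - v ⬝ᵥ x := by
    rw [Matrix.mulVec_sub, sub_dotProduct, dotProduct_sub, dotProduct_sub,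
      hySx, hySy, hxSy, hxSx]
    rw [dotProduct_comm v x]
    ring
  rw [hexp] at hw
  linarith
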